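/- Let G be a multigraph, H = (L,H,M) a full m-fold cover of G, and e an edge of G with endpoints u and v. Then the number of H-colorings of G satisfies P_DP(G,H) ≥ P_DP(G-e, H-e) - P_DP(G·e, H·e), where H-e and H·e are the induced covers of G-e and G·e. -/

import Mathlib

/-- A finite-multiplicity loopless multigraph on vertex set `V`:
`mult u v` is the number of parallel edges joining `u` and `v`. -/
structure Multigraph (V : Type) where
  mult : V → V → ℕ
  symm : ∀ u v, mult u v = mult v u
  loopless : ∀ v, mult v v = 0

/-- A full `m`-fold cover of a multigraph `G`.  The list of a vertex `u` is
identified with `{u} × Fin m`; for each ordered pair `(u,v)` and each edge index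
`i` (only indices `i < G.mult u v` are relevant) the corresponding perfect
matching between the two lists is recorded as a permutation of `Fin m`, the two
orientations of an edge giving inverse permutations. -/
structure FullCover {V : Type} (G : Multigraph V) (m : ℕ) where
  perm : V → V → ℕ → (Fin m ≃ Fin m)
  compat : ∀ u v i, perm v u i = (perm u v i).symm

/-- `f` (choosing one list element per vertex) is an `H`-coloring: it avoids all
cross edges of the cover. -/
def FullCover.IsColoring {V : Type} {G : Multigraph V} {m : ℕ}
    (c : FullCover G m) (f : V → Fin m) : Prop :=
  ∀ u v i, i < G.mult u v → (c.perm u v i) (f u) ≠ f v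

/-- The number of `H`-colorings of `G` for the cover `c`. -/
noncomputable def FullCover.numColorings {V : Type} {G : Multigraph V} {m : ℕ}
    (c : FullCover G m) : ℕ :=
  Nat.card {f : V → Fin m // c.IsColoring f}

/-- The DP color function: the minimum number of colorings over all full
`m`-fold covers. -/
noncomputable def Multigraph.PDP {V : Type} (G : Multigraph V) (m : ℕ) : ℕ :=
  sInf {n | ∃ c : FullCover G m, n = c.numColorings}

/-- The dual DP color function: the maximum number of colorings over all full
`m`-fold covers. -/
noncomputable def Multigraph.PDPdual {V : Type} (G : Multigraph V) (m : ℕ) : ℕ :=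
  sSup {n | ∃ c : FullCover G m, n = c.numColorings}

/-- The number of proper `m`-colorings of (the underlying graph of) `G`. -/
noncomputable def Multigraph.properCount {V : Type} (G : Multigraph V) (m : ℕ) : ℕ :=
  Nat.card {f : V → Fin m // ∀ u v, 0 < G.mult u v → f u ≠ f v}
/-- The multigraph obtained from `G` by deleting one of the edges joining
`u` and `v`. -/
def Multigraph.deleteEdge {V : Type} [DecidableEq V] (G : Multigraph V) (u v : V) :
    Multigraph V where
  mult x y := if (x = u ∧ y = v) ∨ (x = v ∧ y = u) then G.mult x y - 1 else G.mult x y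
  symm := by
    intro x y
    try dsimp only
    by_cases h : (x = u ∧ y = v) ∨ (x = v ∧ y = u)
    · rw [if_pos h, if_pos (by tauto), G.symm]
    · rw [if_neg h, if_neg (by tauto), G.symm]
  loopless := by
    intro x
    try dsimp only
    by_cases h : (x = u ∧ x = v) ∨ (x = v ∧ x = u)
    · rw [if_pos h, G.loopless]
    · rw [if_neg h, G.loopless]

/-- The multigraph obtained from `G` by contracting an edge joining `u` and `v`:
the vertex `v` is removed, the merged vertex is `u`, loops created at the merged
vertex are deleted, and all other parallel edges are retained. -/
def Multigraph.contractEdge {V : Type} [DecidableEq V] (G : Multigraph V) (u v : V) :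
    Multigraph {x : V // x ≠ v} where
  mult x y :=
    if x.1 = u ∧ y.1 = u then 0
    else if x.1 = u then G.mult u y.1 + G.mult v y.1
    else if y.1 = u then G.mult x.1 u + G.mult x.1 v
    else G.mult x.1 y.1
  symm := by
    intro x y
    try dsimp only
    by_cases h1 : x.1 = u <;> by_cases h2 : y.1 = u <;>
      simp only [h1, h2, and_true, and_false, true_and, false_and, if_true, if_false,
        ite_true, ite_false, if_pos, if_neg, not_false_iff] <;>
      first
        | rfl
        | (rw [G.symm u, G.symm v])
        | rw [G.symm]
  loopless := by
    intro x
    try dsimp only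
    by_cases h : x.1 = u
    · rw [if_pos ⟨h, h⟩]
    · rw [if_neg (by tauto), if_neg h, if_neg h, G.loopless]

/-- The cover of `G - e` induced by a cover of `G`, where `e` is the `i`-th edge
joining `u` and `v`: the matching of `e` is deleted and the remaining matchings
between the lists of `u` and `v` are reindexed. -/
def FullCover.deleteEdge {V : Type} [DecidableEq V] {G : Multigraph V} {m : ℕ}
    (c : FullCover G m) (u v : V) (i : ℕ) : FullCover (G.deleteEdge u v) m where
  perm x y j :=
    if (x = u ∧ y = v) ∨ (x = v ∧ y = u) then
      c.perm x y (if j < i then j else j + 1)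
    else c.perm x y j
  compat := by
    intro x y j
    try dsimp only
    by_cases h : (x = u ∧ y = v) ∨ (x = v ∧ y = u)
    · rw [if_pos (by tauto), if_pos h, c.compat]
    · rw [if_neg (by tauto), if_neg h, c.compat]

/-- The cover of `G · e` induced by a cover of `G`, where `e` is the `i`-th edge
joining `u` and `v`: the lists of `u` and `v` are merged along the matching of
`e` (with the merged vertex labelled `u`), and all other matchings are carried
over accordingly. -/
def FullCover.contractEdge {V : Type} [DecidableEq V] {G : Multigraph V} {m : ℕ}
    (c : FullCover G m) (u v : V) (i : ℕ) : FullCover (G.contractEdge u v) m where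
  perm x y j :=
    if x.1 = u ∧ y.1 = u then Equiv.refl _
    else if x.1 = u then
      (if j < G.mult u y.1 then c.perm u y.1 j
       else (c.perm u v i).trans (c.perm v y.1 (j - G.mult u y.1)))
    else if y.1 = u then
      (if j < G.mult x.1 u then c.perm x.1 u j
       else (c.perm x.1 v (j - G.mult x.1 u)).trans (c.perm u v i).symm)
    else c.perm x.1 y.1 j
  compat := by
    intro x y j
    try dsimp only
    by_cases h1 : x.1 = u <;> by_cases h2 : y.1 = u <;>
      simp only [h1, h2, and_true, and_false, true_and, false_and, if_true, if_false,
        ite_true, ite_false, not_false_iff]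
    · rfl
    · rw [G.symm y.1 u]
      by_cases hj : j < G.mult u y.1
      · rw [if_pos hj, if_pos hj, c.compat]
      · rw [if_neg hj, if_neg hj, c.compat]
        rfl
    · rw [G.symm x.1 u]
      by_cases hj : j < G.mult u x.1
      · rw [if_pos hj, if_pos hj, c.compat]
      · rw [if_neg hj, if_neg hj, c.compat x.1 v (j - G.mult u x.1)]
        rfl
    · rw [c.compat]

/-- Cover-level deletion-contraction inequality: if `c` is a full `m`-fold cover
of `G` and `e` is the `i`-th edge joining `u` and `v`, then
`P_DP(G,c) ≥ P_DP(G-e, c-e) - P_DP(G·e, c·e)`. -/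
theorem numColorings_deletion_contraction_ge {V : Type} [Fintype V] [DecidableEq V]
    (G : Multigraph V) (m : ℕ) (c : FullCover G m)
    (u v : V) (i : ℕ) (hi : i < G.mult u v) :
    ((c.deleteEdge u v i).numColorings : ℤ) - (c.contractEdge u v i).numColorings ≤
      (c.numColorings : ℤ) := by
  classical
  have huv : u ≠ v := by
    intro h; subst h; rw [G.loopless] at hi; exact Nat.not_lt_zero i hi
  -- a coloring of the deleted cover which also avoids the matching of `e`
  -- is a coloring of the original cover
  have hdel_to_col : ∀ f : V → Fin m, (c.deleteEdge u v i).IsColoring f →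
      c.perm u v i (f u) ≠ f v → c.IsColoring f := by
    intro f hf h
    have hcond : (u = u ∧ v = v) ∨ (u = v ∧ v = u) := Or.inl ⟨rfl, rfl⟩
    have hm : (G.deleteEdge u v).mult u v = G.mult u v - 1 := by
      simp [Multigraph.deleteEdge]
    have key1 : ∀ j, j < G.mult u v → c.perm u v j (f u) ≠ f v := by
      intro j hj
      rcases lt_trichotomy j i with hji | rfl | hji
      · have := hf u v j (by rw [hm]; omega)
        simpa only [FullCover.deleteEdge, if_pos hcond, if_pos hji, ite_self] using this
      · exact h
      · have := hf u v (j - 1) (by rw [hm]; omega)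
        have hidx : ¬ (j - 1 < i) := by omega
        simp only [FullCover.deleteEdge, if_pos hcond, if_neg hidx] at this
        rwa [Nat.sub_add_cancel (by omega)] at this
    intro x y j hj
    by_cases hxy : (x = u ∧ y = v) ∨ (x = v ∧ y = u)
    · rcases hxy with ⟨hx, hy⟩ | ⟨hx, hy⟩
      · subst hx; subst hy; exact key1 j hj
      · subst hx; subst hy
        rw [G.symm] at hj
        rw [c.compat]
        intro hc
        exact key1 j hj ((Equiv.symm_apply_eq _).mp hc).symm
    · have := hf x y j (by
        simp only [Multigraph.deleteEdge, if_neg hxy]; exact hj)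
      simpa only [FullCover.deleteEdge, if_neg hxy] using this
  -- a coloring of the deleted cover which uses the matching of `e`
  -- restricts to a coloring of the contracted cover
  have hdel_to_con : ∀ f : V → Fin m, (c.deleteEdge u v i).IsColoring f →
      c.perm u v i (f u) = f v →
      (c.contractEdge u v i).IsColoring (fun x => f x.1) := by
    intro f hf h x y j hj
    -- the deleted cover agrees with `c` away from the pair `(u,v)`
    have hfc : ∀ a b j, ¬ ((a = u ∧ b = v) ∨ (a = v ∧ b = u)) → j < G.mult a b →
        c.perm a b j (f a) ≠ f b := by
      intro a b j hab hjab
      have := hf a b j (by simp only [Multigraph.deleteEdge, if_neg hab]; exact hjab)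
      simpa only [FullCover.deleteEdge, if_neg hab] using this
    simp only [Multigraph.contractEdge] at hj
    simp only [FullCover.contractEdge]
    by_cases h1 : x.1 = u <;> by_cases h2 : y.1 = u
    · rw [if_pos ⟨h1, h2⟩] at hj; exact absurd hj (by omega)
    · rw [if_neg (by tauto), if_pos h1] at hj
      rw [if_neg (by tauto), if_pos h1]
      rw [h1]
      by_cases hjm : j < G.mult u y.1
      · rw [if_pos hjm]
        exact hfc u y.1 j (by
          rintro (⟨-, hy⟩ | ⟨hu, -⟩)
          · exact y.2 hy
          · exact huv hu) hjm
      · rw [if_neg hjm]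
        simp only [Equiv.trans_apply, h]
        exact hfc v y.1 (j - G.mult u y.1) (by
          rintro (⟨hvu, -⟩ | ⟨-, hy⟩)
          · exact huv hvu.symm
          · exact h2 hy) (by omega)
    · rw [if_neg (by tauto), if_neg h1, if_pos h2] at hj
      rw [if_neg (by tauto), if_neg h1, if_pos h2]
      rw [h2]
      by_cases hjm : j < G.mult x.1 u
      · rw [if_pos hjm]
        exact hfc x.1 u j (by
          rintro (⟨-, huv'⟩ | ⟨hx, -⟩)
          · exact huv huv'
          · exact x.2 hx) hjm
      · rw [if_neg hjm]
        simp only [Equiv.trans_apply]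
        intro hc
        have : c.perm x.1 v (j - G.mult x.1 u) (f x.1) = f v :=
          ((Equiv.symm_apply_eq _).mp hc).trans h
        exact hfc x.1 v (j - G.mult x.1 u) (by
          rintro (⟨hx, -⟩ | ⟨hx, -⟩)
          · exact h1 hx
          · exact x.2 hx) (by omega) this
    · rw [if_neg (by tauto), if_neg h1, if_neg h2] at hj
      rw [if_neg (by tauto), if_neg h1, if_neg h2]
      exact hfc x.1 y.1 j (by
        rintro (⟨hx, -⟩ | ⟨hx, -⟩)
        · exact h1 hx
        · exact x.2 hx) hj
  -- the injection
  have key : (c.deleteEdge u v i).numColorings ≤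
      c.numColorings + (c.contractEdge u v i).numColorings := by
    have hinj : ∃ Φ : {f : V → Fin m // (c.deleteEdge u v i).IsColoring f} →
        {f : V → Fin m // c.IsColoring f} ⊕
          {g : {x : V // x ≠ v} → Fin m // (c.contractEdge u v i).IsColoring g},
        Function.Injective Φ := by
      refine ⟨fun fp => if h : c.perm u v i (fp.1 u) = fp.1 v then
        Sum.inr ⟨fun x => fp.1 x.1, hdel_to_con _ fp.2 h⟩
        else Sum.inl ⟨fp.1, hdel_to_col _ fp.2 h⟩, ?_⟩
      rintro ⟨f, hf⟩ ⟨f', hf'⟩ heq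
      by_cases h : c.perm u v i (f u) = f v <;>
        by_cases h' : c.perm u v i (f' u) = f' v <;>
          simp only [h, h', dif_pos, dif_neg, not_false_iff, Sum.inr.injEq,
            Sum.inl.injEq, Subtype.mk.injEq, reduceCtorEq] at heq
      · have hres : ∀ x : {x : V // x ≠ v}, f x.1 = f' x.1 := fun x => congrFun heq x
        refine Subtype.ext (funext fun x => ?_)
        show f x = f' x
        by_cases hx : x = v
        · subst hx
          rw [← h, ← h', hres ⟨u, huv⟩]
        · exact hres ⟨x, hx⟩
      · exact Subtype.ext heq
    obtain ⟨Φ, hΦ⟩ := hinj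
    calc (c.deleteEdge u v i).numColorings
        ≤ Nat.card ({f : V → Fin m // c.IsColoring f} ⊕
            {g : {x : V // x ≠ v} → Fin m // (c.contractEdge u v i).IsColoring g}) :=
          Nat.card_le_card_of_injective Φ hΦ
      _ = c.numColorings + (c.contractEdge u v i).numColorings := Nat.card_sum
  omega
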